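/- Let f(z) = ((1+z²)/(1−z²))² with complex derivatives f′ and f″. For every s in the open quarter disk Q = {z ∈ ℂ : |z| < 1, Re z > 0, Im z > 0} (so that f′(s) ≠ 0 and t := f(s) lies in the upper half-plane, in particular t ∉ {0,1}), the following identity holds: conj(s)/(2(1+|s|²) f′(s)) + f″(s)/(4 f′(s)²) = 1/(8t) + 1/(8(t−1)) + (conj(t)/|t| + conj(t−1)/|t−1|)/(8(|t| + |t−1| + 1)). (The right-hand side is the Wirtinger derivative ∂_t log(|t||t−1|(|√t+1|+|√t−1|)²)^{1/4}, i.e. the value b(−∞) in the variational formula for the determinant.) -/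

import Mathlib

/-- The map `f(z) = ((1+z²)/(1−z²))²`. -/
noncomputable def f (z : ℂ) : ℂ := ((1 + z ^ 2) / (1 - z ^ 2)) ^ 2

/-- The open quarter of the unit disk. -/
def Q : Set ℂ := {z : ℂ | ‖z‖ < 1 ∧ 0 < z.re ∧ 0 < z.im}

lemma hasDerivAt_f {z : ℂ} (hz : 1 - z ^ 2 ≠ 0) :
    HasDerivAt f (8 * z * (1 + z ^ 2) / (1 - z ^ 2) ^ 3) z := by
  have hz2 : HasDerivAt (fun z : ℂ => z ^ 2) (2 * z) z := by
    simpa using hasDerivAt_pow 2 z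
  have hA : HasDerivAt (fun z : ℂ => 1 + z ^ 2) (2 * z) z := hz2.const_add 1
  have hB : HasDerivAt (fun z : ℂ => 1 - z ^ 2) (-(2 * z)) z := hz2.const_sub 1
  have hq := hA.fun_div hB hz
  have hf : HasDerivAt f _ z := hq.fun_pow 2
  convert hf using 1
  norm_num
  field_simp
  ring

lemma deriv_f {z : ℂ} (hz : 1 - z ^ 2 ≠ 0) :
    deriv f z = 8 * z * (1 + z ^ 2) / (1 - z ^ 2) ^ 3 := (hasDerivAt_f hz).deriv

lemma deriv_deriv_f {z : ℂ} (hz : 1 - z ^ 2 ≠ 0) :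
    deriv (deriv f) z = 8 * (1 + 8 * z ^ 2 + 3 * z ^ 4) / (1 - z ^ 2) ^ 4 := by
  have hcont : Continuous fun w : ℂ => 1 - w ^ 2 := by continuity
  have hopen : IsOpen {w : ℂ | 1 - w ^ 2 ≠ 0} := isOpen_compl_singleton.preimage hcont
  have hev : deriv f =ᶠ[nhds z] fun w => 8 * w * (1 + w ^ 2) / (1 - w ^ 2) ^ 3 := by
    filter_upwards [hopen.mem_nhds hz] with w hw using deriv_f hw
  rw [hev.deriv_eq]
  have hz2 : HasDerivAt (fun z : ℂ => z ^ 2) (2 * z) z := by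
    simpa using hasDerivAt_pow 2 z
  have hB : HasDerivAt (fun z : ℂ => 1 - z ^ 2) (-(2 * z)) z := hz2.const_sub 1
  have h8 : HasDerivAt (fun w : ℂ => 8 * w) (8 : ℂ) z := by
    simpa using (hasDerivAt_id z).const_mul (8 : ℂ)
  have hN : HasDerivAt (fun w : ℂ => 8 * w * (1 + w ^ 2))
      (8 * (1 + z ^ 2) + 8 * z * (2 * z)) z := h8.mul (hz2.const_add 1)
  have hD : HasDerivAt (fun w : ℂ => (1 - w ^ 2) ^ 3)
      ((3 : ℕ) * (1 - z ^ 2) ^ 2 * (-(2 * z))) z := by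
    simpa using hB.fun_pow 3
  have hq := hN.fun_div hD (pow_ne_zero 3 hz)
  rw [hq.deriv]
  field_simp
  ring

set_option maxHeartbeats 4000000 in
lemma key_identity (s c : ℂ) (hs0 : s ≠ 0) (hc0 : c ≠ 0) (hm : 1 - s ^ 2 ≠ 0)
    (hp : 1 + s ^ 2 ≠ 0) (hmc : 1 - c ^ 2 ≠ 0) (hpc : 1 + c ^ 2 ≠ 0)
    (h1sc : 1 + s * c ≠ 0) :
    c / (2 * (1 + s * c) * (8 * s * (1 + s ^ 2) / (1 - s ^ 2) ^ 3)) +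
      8 * (1 + 8 * s ^ 2 + 3 * s ^ 4) / (1 - s ^ 2) ^ 4 /
        (4 * (8 * s * (1 + s ^ 2) / (1 - s ^ 2) ^ 3) ^ 2) =
    1 / (8 * ((1 + s ^ 2) / (1 - s ^ 2)) ^ 2) + 1 / (8 * (4 * s ^ 2 / (1 - s ^ 2) ^ 2)) +
      (((1 + c ^ 2) / (1 - c ^ 2)) ^ 2 /
          ((1 + s ^ 2) * (1 + c ^ 2) / ((1 - s ^ 2) * (1 - c ^ 2))) +
        (((1 + c ^ 2) / (1 - c ^ 2)) ^ 2 - 1) /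
          (4 * (s * c) / ((1 - s ^ 2) * (1 - c ^ 2)))) /
      (8 * (2 * (1 + s * c) ^ 2 / ((1 - s ^ 2) * (1 - c ^ 2)))) := by
  have hT1 : c / (2 * (1 + s * c) * (8 * s * (1 + s ^ 2) / (1 - s ^ 2) ^ 3)) =
      c * (1 - s ^ 2) ^ 3 / (16 * s * (1 + s ^ 2) * (1 + s * c)) := by
    rw [show (2:ℂ) * (1 + s * c) * (8 * s * (1 + s ^ 2) / (1 - s ^ 2) ^ 3) =
        16 * s * (1 + s ^ 2) * (1 + s * c) / (1 - s ^ 2) ^ 3 from by ring,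
      div_div_eq_mul_div]
  have hT2 : 8 * (1 + 8 * s ^ 2 + 3 * s ^ 4) / (1 - s ^ 2) ^ 4 /
        (4 * (8 * s * (1 + s ^ 2) / (1 - s ^ 2) ^ 3) ^ 2) =
      8 * (1 + 8 * s ^ 2 + 3 * s ^ 4) * ((1 - s ^ 2) ^ 3) ^ 2 /
        ((1 - s ^ 2) ^ 4 * (4 * (8 * s * (1 + s ^ 2)) ^ 2)) := by
    rw [div_pow, ← mul_div_assoc, div_div_eq_mul_div, div_mul_eq_mul_div, div_div]
  have hR1 : (1:ℂ) / (8 * ((1 + s ^ 2) / (1 - s ^ 2)) ^ 2) =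
      1 * (1 - s ^ 2) ^ 2 / (8 * (1 + s ^ 2) ^ 2) := by
    rw [div_pow, ← mul_div_assoc, div_div_eq_mul_div]
  have hR2 : (1:ℂ) / (8 * (4 * s ^ 2 / (1 - s ^ 2) ^ 2)) =
      1 * (1 - s ^ 2) ^ 2 / (8 * (4 * s ^ 2)) := by
    rw [← mul_div_assoc, div_div_eq_mul_div]
  have hU1 : ((1 + c ^ 2) / (1 - c ^ 2)) ^ 2 /
        ((1 + s ^ 2) * (1 + c ^ 2) / ((1 - s ^ 2) * (1 - c ^ 2))) =
      (1 + c ^ 2) ^ 2 * ((1 - s ^ 2) * (1 - c ^ 2)) /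
        ((1 - c ^ 2) ^ 2 * ((1 + s ^ 2) * (1 + c ^ 2))) := by
    rw [div_pow, div_div_eq_mul_div, div_mul_eq_mul_div, div_div]
  have hU2 : (((1 + c ^ 2) / (1 - c ^ 2)) ^ 2 - 1) /
        (4 * (s * c) / ((1 - s ^ 2) * (1 - c ^ 2))) =
      ((1 + c ^ 2) ^ 2 - (1 - c ^ 2) ^ 2) * ((1 - s ^ 2) * (1 - c ^ 2)) /
        ((1 - c ^ 2) ^ 2 * (4 * (s * c))) := by
    rw [div_pow, div_sub_one (pow_ne_zero 2 hmc), div_div_eq_mul_div,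
      div_mul_eq_mul_div, div_div]
  have hQ6 : (8:ℂ) * (2 * (1 + s * c) ^ 2 / ((1 - s ^ 2) * (1 - c ^ 2))) =
      8 * (2 * (1 + s * c) ^ 2) / ((1 - s ^ 2) * (1 - c ^ 2)) := by
    rw [← mul_div_assoc]
  have nT1 : (16:ℂ) * s * (1 + s ^ 2) * (1 + s * c) ≠ 0 :=
    mul_ne_zero (mul_ne_zero (mul_ne_zero (by norm_num) hs0) hp) h1sc
  have nT2 : (1 - s ^ 2) ^ 4 * ((4:ℂ) * (8 * s * (1 + s ^ 2)) ^ 2) ≠ 0 :=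
    mul_ne_zero (pow_ne_zero 4 hm) (mul_ne_zero (by norm_num)
      (pow_ne_zero 2 (mul_ne_zero (mul_ne_zero (by norm_num) hs0) hp)))
  have nR1 : (8:ℂ) * (1 + s ^ 2) ^ 2 ≠ 0 := mul_ne_zero (by norm_num) (pow_ne_zero 2 hp)
  have nR2 : (8:ℂ) * (4 * s ^ 2) ≠ 0 :=
    mul_ne_zero (by norm_num) (mul_ne_zero (by norm_num) (pow_ne_zero 2 hs0))
  have nD1 : (1 - c ^ 2) ^ 2 * ((1 + s ^ 2) * (1 + c ^ 2)) ≠ 0 :=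
    mul_ne_zero (pow_ne_zero 2 hmc) (mul_ne_zero hp hpc)
  have nD2 : (1 - c ^ 2) ^ 2 * ((4:ℂ) * (s * c)) ≠ 0 :=
    mul_ne_zero (pow_ne_zero 2 hmc) (mul_ne_zero (by norm_num) (mul_ne_zero hs0 hc0))
  have nR3 : (1 - c ^ 2) ^ 2 * ((1 + s ^ 2) * (1 + c ^ 2)) *
      ((1 - c ^ 2) ^ 2 * ((4:ℂ) * (s * c))) * (8 * (2 * (1 + s * c) ^ 2)) ≠ 0 :=
    mul_ne_zero (mul_ne_zero nD1 nD2)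
      (mul_ne_zero (by norm_num) (mul_ne_zero (by norm_num) (pow_ne_zero 2 h1sc)))
  rw [hT1, hT2, hR1, hR2, hU1, hU2, div_add_div _ _ nD1 nD2, hQ6, div_div_eq_mul_div,
    div_mul_eq_mul_div, div_div, div_add_div _ _ nT1 nT2, div_add_div _ _ nR1 nR2,
    div_add_div _ _ (mul_ne_zero nR1 nR2) nR3,
    div_eq_div_iff (mul_ne_zero nT1 nT2) (mul_ne_zero (mul_ne_zero nR1 nR2) nR3)]
  ring


theorem b_minus_infinity_identity (s : ℂ) (hs : s ∈ Q) :
    deriv f s ≠ 0 ∧ 0 < (f s).im ∧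
    (starRingEnd ℂ) s / (2 * ((1 + ‖s‖ ^ 2 : ℝ) : ℂ) * deriv f s) +
      deriv (deriv f) s / (4 * (deriv f s) ^ 2) =
    1 / (8 * f s) + 1 / (8 * (f s - 1)) +
      ((starRingEnd ℂ) (f s) / ((‖f s‖ : ℝ) : ℂ) +
        (starRingEnd ℂ) (f s - 1) / ((‖f s - 1‖ : ℝ) : ℂ)) /
      (8 * ((‖f s‖ + ‖f s - 1‖ + 1 : ℝ) : ℂ)) := by
  obtain ⟨habs, hre, him⟩ := hs
  have hs0 : s ≠ 0 := fun h => by simp [h] at hre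
  have habsnn := norm_nonneg s
  have habs2 : ‖s ^ 2‖ < 1 := by
    rw [norm_pow]; nlinarith
  have hm : (1 : ℂ) - s ^ 2 ≠ 0 := by
    intro h
    have h2 : s ^ 2 = 1 := by linear_combination -h
    rw [h2] at habs2; simp at habs2
  have hp : (1 : ℂ) + s ^ 2 ≠ 0 := by
    intro h
    have h2 : s ^ 2 = -1 := by linear_combination h
    rw [h2] at habs2; simp at habs2
  have hc0 : (starRingEnd ℂ) s ≠ 0 := by simpa using hs0
  have hmc : (1 : ℂ) - (starRingEnd ℂ) s ^ 2 ≠ 0 := by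
    intro h
    apply hm
    have := congrArg (starRingEnd ℂ) h
    simpa using this
  have hpc : (1 : ℂ) + (starRingEnd ℂ) s ^ 2 ≠ 0 := by
    intro h
    apply hp
    have := congrArg (starRingEnd ℂ) h
    simpa using this
  have hsc : s * (starRingEnd ℂ) s = ((Complex.normSq s : ℝ) : ℂ) := Complex.mul_conj s
  have h1sc : (1 : ℂ) + s * (starRingEnd ℂ) s ≠ 0 := by
    rw [hsc]
    intro h
    have := congrArg Complex.re h
    simp at this
    nlinarith [Complex.normSq_nonneg s]
  -- derivative values
  have hd1 : deriv f s = 8 * s * (1 + s ^ 2) / (1 - s ^ 2) ^ 3 := deriv_f hm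
  have hd2 : deriv (deriv f) s = 8 * (1 + 8 * s ^ 2 + 3 * s ^ 4) / (1 - s ^ 2) ^ 4 :=
    deriv_deriv_f hm
  have hderiv_ne : deriv f s ≠ 0 := by
    rw [hd1]
    exact div_ne_zero (by exact mul_ne_zero (mul_ne_zero (by norm_num) hs0) hp)
      (pow_ne_zero 3 hm)
  refine ⟨hderiv_ne, ?_, ?_⟩
  · -- imaginary part positive
    have hfs : f s = ((1 + s ^ 2) / (1 - s ^ 2)) ^ 2 := rfl
    set w := (1 + s ^ 2) / (1 - s ^ 2) with hw
    have hns : Complex.normSq s < 1 := by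
      rw [← Complex.sq_norm]; nlinarith
    have hd : 0 < Complex.normSq (1 - s ^ 2) := Complex.normSq_pos.mpr hm
    have hwre : 0 < w.re := by
      rw [hw, Complex.div_re, ← add_div]
      apply div_pos _ hd
      simp only [Complex.add_re, Complex.sub_re, Complex.one_re, Complex.add_im,
        Complex.sub_im, Complex.one_im, pow_two, Complex.mul_re, Complex.mul_im]
      simp only [Complex.normSq_apply] at hns
      nlinarith
    have hwim : 0 < w.im := by
      rw [hw, Complex.div_im, div_sub_div_same]
      apply div_pos _ hd
      simp only [Complex.add_re, Complex.sub_re, Complex.one_re, Complex.add_im,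
        Complex.sub_im, Complex.one_im, pow_two, Complex.mul_re, Complex.mul_im]
      nlinarith
    rw [hfs, pow_two, Complex.mul_im]
    nlinarith
  · -- the identity
    set c := (starRingEnd ℂ) s with hcdef
    have e2 : f s - 1 = 4 * s ^ 2 / (1 - s ^ 2) ^ 2 := by
      simp only [f]
      field_simp
      ring
    have e3 : ((‖f s‖ : ℝ) : ℂ) =
        (1 + s ^ 2) * (1 + c ^ 2) / ((1 - s ^ 2) * (1 - c ^ 2)) := by
      have h1 : ‖f s‖ = Complex.normSq (1 + s ^ 2) / Complex.normSq (1 - s ^ 2) := by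
        simp only [f, norm_pow, norm_div]
        rw [div_pow, Complex.sq_norm, Complex.sq_norm]
      rw [h1, Complex.ofReal_div, ← Complex.mul_conj, ← Complex.mul_conj]
      simp only [map_add, map_sub, map_one, map_pow, ← hcdef]
    have e4 : ((‖f s - 1‖ : ℝ) : ℂ) =
        4 * (s * c) / ((1 - s ^ 2) * (1 - c ^ 2)) := by
      have h1 : ‖f s - 1‖ = 4 * Complex.normSq s / Complex.normSq (1 - s ^ 2) := by
        rw [e2]
        rw [norm_div, norm_mul, norm_pow, norm_pow, Complex.sq_norm, Complex.sq_norm]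
        norm_num
      rw [h1, Complex.ofReal_div, Complex.ofReal_mul, ← Complex.mul_conj, ← Complex.mul_conj]
      simp only [map_sub, map_one, map_pow, ← hcdef]
      push_cast
      ring
    have e5 : (starRingEnd ℂ) (f s) = ((1 + c ^ 2) / (1 - c ^ 2)) ^ 2 := by
      simp only [f, map_pow, map_div₀, map_add, map_sub, map_one, ← hcdef]
    have e6 : (starRingEnd ℂ) (f s - 1) = ((1 + c ^ 2) / (1 - c ^ 2)) ^ 2 - 1 := by
      rw [map_sub, e5, map_one]
    have e7 : ((‖f s‖ + ‖f s - 1‖ + 1 : ℝ) : ℂ) =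
        2 * (1 + s * c) ^ 2 / ((1 - s ^ 2) * (1 - c ^ 2)) := by
      push_cast
      rw [e3, e4]
      field_simp
      ring
    have e8 : ((1 + ‖s‖ ^ 2 : ℝ) : ℂ) = 1 + s * c := by
      push_cast
      rw [← Complex.ofReal_pow, Complex.sq_norm, hsc]
    rw [hd1, hd2, e3, e4, e5, e6, e7, e8, e2]
    simp only [f]
    exact key_identity s c hs0 hc0 hm hp hmc hpc h1sc
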